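/- Fix positive integers T, t and x ∈ ℝ^{Tt}. For n ∈ {1, …, Tt}: if z̃_n ∈ [31/32, 33/32], Dominate(n) does not hold, and z̃_{n−1} ≤ 33/32 and z̃_{n+1} ≤ 33/32, then there exists k ∈ {1, …, n−1} such that Dominate(k) holds and z̃_k > 5/7. -/

import Mathlib

/-- The `k`-th coordinate (1-indexed) of `x ∈ ℝ^d`, with out-of-range coordinates
(including the convention `x_0 = 0`) equal to `0`. -/
noncomputable def coord {d : ℕ} (x : EuclideanSpace ℝ (Fin d)) (k : ℕ) : ℝ :=
  if h : 1 ≤ k ∧ k ≤ d then x ⟨k - 1, by omega⟩ else 0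

/-- The piecewise scalar component `v_y` of the hard instance. -/
noncomputable def vFun (y x : ℝ) : ℝ :=
  if x ≤ 31 / 32 * y then x ^ 2 / 2
  else if x ≤ y then x ^ 2 / 2 - 16 * (x - 31 / 32 * y) ^ 2
  else if x ≤ 33 / 32 * y then x ^ 2 / 2 - y ^ 2 / 32 + 16 * (x - 33 / 32 * y) ^ 2
  else x ^ 2 / 2 - y ^ 2 / 32

/-- The quadratic (convex) part `q_{T,t}` of the hard instance, with the convention
`x_0 = 0` (encoded by `coord x 0 = 0`). -/
noncomputable def qFun (T t : ℕ) (x : EuclideanSpace ℝ (Fin (T * t))) : ℝ :=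
  (1 / 2) * ∑ i ∈ Finset.range t,
    ((7 / 8 * coord x (i * T) - coord x (i * T + 1)) ^ 2
      + ∑ j ∈ Finset.Icc 1 (T - 1), (coord x (i * T + j + 1) - coord x (i * T + j)) ^ 2)

/-- The reference vector `y ∈ ℝ^{Tt}` with `y_{qT+b} = (7/8)^q` for `b ∈ {1, …, T}`;
in 0-based indexing, `y i = (7/8)^(i / T)`. -/
noncomputable def yVec (T t : ℕ) : EuclideanSpace ℝ (Fin (T * t)) :=
  WithLp.toLp 2 (fun i : Fin (T * t) => (7 / 8 : ℝ) ^ ((i : ℕ) / T))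

/-- The hard instance `g_{T,t}(x) = q_{T,t}(x) + Σ_{i=1}^{Tt} v_{y_i}(x_i)`. -/
noncomputable def gFun (T t : ℕ) (x : EuclideanSpace ℝ (Fin (T * t))) : ℝ :=
  qFun T t x + ∑ i : Fin (T * t), vFun (yVec T t i) (x i)

/-- Extended coordinates: `x̃_0 = 0`, `x̃_i = x_i` for `1 ≤ i ≤ Tt`, `x̃_{Tt+1} = x_{Tt}`. -/
noncomputable def xTilde (T t : ℕ) (x : EuclideanSpace ℝ (Fin (T * t))) (k : ℕ) : ℝ :=
  if k ≤ T * t then coord x k else coord x (T * t)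

/-- Extended reference coordinates: `ỹ_0 = 1`, `ỹ_i = y_i` for `1 ≤ i ≤ Tt`,
`ỹ_{Tt+1} = y_{Tt}`. -/
noncomputable def yTilde (T t : ℕ) (k : ℕ) : ℝ :=
  if k = 0 then 1
  else if k ≤ T * t then coord (yVec T t) k
  else coord (yVec T t) (T * t)

/-- The ratios `z̃_k = x̃_k / ỹ_k`. -/
noncomputable def zTilde (T t : ℕ) (x : EuclideanSpace ℝ (Fin (T * t))) (k : ℕ) : ℝ :=
  xTilde T t x k / yTilde T t k

/-- `Dominate k` holds iff `x_k = 0` or `|(∇g_{T,t}(x))_k| > 0.19·|x_k|`. -/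
def Dominate (T t : ℕ) (x : EuclideanSpace ℝ (Fin (T * t))) (k : ℕ) : Prop :=
  coord x k = 0 ∨ |coord (gradient (gFun T t) x) k| > 0.19 * |coord x k|


theorem hasDerivAt_mul_max (x : ℝ) : HasDerivAt (fun u : ℝ => u * max u 0) (2 * max x 0) x := by
  rcases lt_trichotomy x 0 with h | h | h
  · have : (fun u : ℝ => u * max u 0) =ᶠ[nhds x] fun _ => (0:ℝ) := by
      filter_upwards [eventually_lt_nhds h] with u hu
      simp [max_eq_right hu.le]
    rw [show (2 * max x 0) = 0 by simp [max_eq_right h.le]]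
    exact (hasDerivAt_const x (0:ℝ)).congr_of_eventuallyEq this
  · subst h
    rw [hasDerivAt_iff_isLittleO]
    simp only [max_self, mul_zero, zero_mul, sub_zero, smul_eq_mul]
    have hb : (fun u : ℝ => u * max u 0) =O[nhds 0] fun u => u * u := by
      apply Asymptotics.IsBigO.of_bound 1
      filter_upwards with u
      have h1 : |max u 0| ≤ |u| := by
        rcases le_or_gt u 0 with h | h
        · simp [max_eq_right h]
        · simp [max_eq_left h.le]
      simpa [one_mul, norm_mul, Real.norm_eq_abs] using
        mul_le_mul_of_nonneg_left h1 (abs_nonneg u)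
    have hs : (fun u : ℝ => u * u) =o[nhds 0] fun u => u := by
      have h1 : (fun u : ℝ => u) =o[nhds 0] fun _ => (1:ℝ) := by
        exact Asymptotics.isLittleO_id_const one_ne_zero
      simpa using h1.mul_isBigO (Asymptotics.isBigO_refl (fun u : ℝ => u) (nhds 0))
    exact hb.trans_isLittleO (by simpa using hs)
  · have heq : (fun u : ℝ => u * max u 0) =ᶠ[nhds x] fun u => u * u := by
      filter_upwards [eventually_gt_nhds h] with u hu
      simp [max_eq_left hu.le]
    have h2 : HasDerivAt (fun u : ℝ => u * u) (2 * max x 0) x := by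
      have := (hasDerivAt_id' x).mul (hasDerivAt_id' x)
      simpa [max_eq_left h.le, two_mul, id, Pi.mul_def] using this
    exact h2.congr_of_eventuallyEq heq

theorem hasDerivAt_maxsq (c x : ℝ) :
    HasDerivAt (fun u : ℝ => max (u - c) 0 ^ 2) (2 * max (x - c) 0) x := by
  have hinner : HasDerivAt (fun u : ℝ => u - c) 1 x := (hasDerivAt_id x).sub_const c
  have houter := hasDerivAt_mul_max (x - c)
  have hcomp := houter.comp x hinner
  have heq : (fun u : ℝ => (u - c) * max (u - c) 0) = fun u : ℝ => max (u - c) 0 ^ 2 := by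
    funext u
    rcases le_or_gt u c with h | h
    · simp [max_eq_right (by linarith : u - c ≤ 0)]
    · rw [max_eq_left (by linarith : (0:ℝ) ≤ u - c)]; ring
  rw [show (fun u : ℝ => max (u - c) 0 ^ 2) = ((fun v : ℝ => v * max v 0) ∘ fun u => u - c) by
    rw [← heq]; rfl]
  simpa using hcomp

/-- scalar derivative of vFun -/
noncomputable def dv (y x : ℝ) : ℝ :=
  x - 32 * max (x - 31/32*y) 0 + 64 * max (x - y) 0 - 32 * max (x - 33/32*y) 0

theorem vFun_eq_max (y : ℝ) (hy : 0 < y) (x : ℝ) :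
    vFun y x = x^2/2 - 16 * max (x - 31/32*y) 0 ^ 2 + 32 * max (x - y) 0 ^ 2
      - 16 * max (x - 33/32*y) 0 ^ 2 := by
  unfold vFun
  rcases le_or_gt x (31/32*y) with h1 | h1
  · rw [if_pos h1, max_eq_right (by linarith), max_eq_right (by linarith),
      max_eq_right (by linarith)]
    ring
  · rw [if_neg (not_le.mpr h1)]
    rcases le_or_gt x y with h2 | h2
    · rw [if_pos h2, max_eq_left (by linarith), max_eq_right (by linarith),
        max_eq_right (by linarith)]
      ring
    · rw [if_neg (not_le.mpr h2)]
      rcases le_or_gt x (33/32*y) with h3 | h3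
      · rw [if_pos h3, max_eq_left (by linarith), max_eq_left (by linarith),
          max_eq_right (by linarith)]
        ring
      · rw [if_neg (not_le.mpr h3), max_eq_left (by linarith), max_eq_left (by linarith),
          max_eq_left (by linarith)]
        ring

theorem hasDerivAt_vFun (y : ℝ) (hy : 0 < y) (x : ℝ) :
    HasDerivAt (vFun y) (dv y x) x := by
  have hfun : vFun y = fun u => u^2/2 - 16 * max (u - 31/32*y) 0 ^ 2
      + 32 * max (u - y) 0 ^ 2 - 16 * max (u - 33/32*y) 0 ^ 2 := by
    funext u; exact vFun_eq_max y hy u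
  rw [hfun]
  have h0 : HasDerivAt (fun u : ℝ => u^2/2) x x := by
    have := (hasDerivAt_pow 2 x).div_const 2
    simpa using this
  have h1 := (hasDerivAt_maxsq (31/32*y) x).const_mul (16:ℝ)
  have h2 := (hasDerivAt_maxsq y x).const_mul (32:ℝ)
  have h3 := (hasDerivAt_maxsq (33/32*y) x).const_mul (16:ℝ)
  have := ((h0.sub h1).add h2).sub h3
  refine this.congr_deriv ?_
  unfold dv
  ring
noncomputable def cb (T k : ℕ) : ℝ := if (k-1) % T = 0 then 7/8 else 1

lemma cb_nonneg (T k : ℕ) : 0 ≤ cb T k := by unfold cb; split <;> norm_num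

lemma cb_le_one (T k : ℕ) : cb T k ≤ 1 := by unfold cb; split <;> norm_num

lemma qFun_eq_qsum (T t : ℕ) (hT : 0 < T) (x : EuclideanSpace ℝ (Fin (T * t))) :
    qFun T t x = (1/2) * ∑ k ∈ Finset.range (T * t),
      (coord x (k+1) - cb T (k+1) * coord x k)^2 := by
  unfold qFun
  congr 1
  set f : ℕ → ℝ := fun k => (coord x (k+1) - cb T (k+1) * coord x k)^2 with hf
  have step1 : ∑ k ∈ Finset.range (T * t), f k
      = ∑ p ∈ Finset.range t ×ˢ Finset.range T, f (p.1 * T + p.2) := by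
    apply Finset.sum_nbij' (i := fun k => ((k / T, k % T) : ℕ × ℕ))
      (j := fun p => p.1 * T + p.2)
    · intro a ha
      simp only [Finset.mem_range] at ha
      simp only [Finset.mem_product, Finset.mem_range]
      refine ⟨(Nat.div_lt_iff_lt_mul hT).mpr (by rw [Nat.mul_comm] at ha; exact ha),
        Nat.mod_lt _ hT⟩
    · intro p hp
      simp only [Finset.mem_product, Finset.mem_range] at hp
      simp only [Finset.mem_range]
      calc p.1 * T + p.2 < p.1 * T + T := by omega
        _ = (p.1 + 1) * T := by ring
        _ ≤ t * T := Nat.mul_le_mul_right T hp.1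
        _ = T * t := Nat.mul_comm t T
    · intro a _; exact Nat.div_add_mod' a T
    · intro p hp
      simp only [Finset.mem_product, Finset.mem_range] at hp
      have h1 : (p.1 * T + p.2) / T = p.1 := by
        rw [Nat.mul_comm p.1 T, Nat.mul_add_div hT, Nat.div_eq_of_lt hp.2]
        omega
      have h2 : (p.1 * T + p.2) % T = p.2 := by
        rw [Nat.add_mod, Nat.mul_mod_left, Nat.mod_eq_of_lt hp.2]
        simp [Nat.mod_eq_of_lt hp.2]
      rw [h1, h2]
    · intro a _
      rw [Nat.div_add_mod' a T]
  rw [step1, Finset.sum_product]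
  apply Finset.sum_congr rfl
  intro i _
  have inner : ∑ j ∈ Finset.range T, f (i * T + j)
      = f (i * T) + ∑ j ∈ Finset.range (T-1), f (i * T + (j + 1)) := by
    have hT' : T = (T - 1) + 1 := by omega
    rw [hT', Finset.sum_range_succ']
    simp only [Nat.add_zero]
    rw [← hT']
    ring
  rw [inner]
  congr 1
  · have hcb : cb T (i * T + 1) = 7/8 := by
      unfold cb
      simp [Nat.mul_mod_left]
    rw [hf]
    simp only [hcb]
    ring
  · rw [show Finset.Icc 1 (T-1) = Finset.Ico 1 T by
      rw [← Finset.Ico_add_one_right_eq_Icc]; congr 1; omega]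
    rw [Finset.sum_Ico_eq_sum_range]
    rw [show T - 1 = T - 1 by rfl]
    apply Finset.sum_congr rfl
    intro j hj
    simp only [Finset.mem_range] at hj
    have hcb : cb T (i * T + (j + 1) + 1) = 1 := by
      unfold cb
      rw [Nat.add_sub_cancel]
      have e2 : (i * T + (j + 1)) % T = j + 1 := by
        rw [Nat.add_mod, Nat.mul_mod_left, Nat.mod_eq_of_lt (show j+1 < T by omega)]
        simp [Nat.mod_eq_of_lt (show j+1 < T by omega)]
      rw [e2]
      simp
    rw [hf]
    simp only [hcb, one_mul]
    rw [show i * T + (1+j) + 1 = i * T + (j+1) + 1 by omega,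
      show i * T + (1+j) = i * T + (j+1) by omega]
noncomputable def prC (T t : ℕ) (k : ℕ) : EuclideanSpace ℝ (Fin (T*t)) →L[ℝ] ℝ :=
  if h : 1 ≤ k ∧ k ≤ T*t then EuclideanSpace.proj (⟨k-1, by omega⟩ : Fin (T*t)) else 0

lemma proj_ap {T t : ℕ} (i : Fin (T*t)) (z : EuclideanSpace ℝ (Fin (T*t))) :
    (EuclideanSpace.proj i : EuclideanSpace ℝ (Fin (T*t)) →L[ℝ] ℝ) z = z i := rfl

lemma prC_apply (T t k : ℕ) (x : EuclideanSpace ℝ (Fin (T*t))) :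
    prC T t k x = coord x k := by
  unfold prC coord
  split_ifs with h
  · rfl
  · rfl

noncomputable def ell (T t : ℕ) (k : ℕ) : EuclideanSpace ℝ (Fin (T*t)) →L[ℝ] ℝ :=
  prC T t (k+1) - cb T (k+1) • prC T t k

lemma ell_apply (T t k : ℕ) (x : EuclideanSpace ℝ (Fin (T*t))) :
    ell T t k x = coord x (k+1) - cb T (k+1) * coord x k := by
  simp [ell, prC_apply]

lemma coord_val {T t : ℕ} (x : EuclideanSpace ℝ (Fin (T*t))) (m : Fin (T*t)) :
    coord x (m.1+1) = x m := by
  unfold coord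
  rw [dif_pos ⟨by omega, by omega⟩]
  exact congrArg x (Fin.ext (by simp))

lemma yVec_pos (T t : ℕ) (i : Fin (T*t)) : 0 < yVec T t i :=
  by show (0:ℝ) < (7/8:ℝ)^((i:ℕ)/T); exact pow_pos (by norm_num) _

lemma hasFDerivAt_gFun (T t : ℕ) (hT : 0 < T) (x : EuclideanSpace ℝ (Fin (T*t))) :
    HasFDerivAt (gFun T t)
      ((∑ k ∈ Finset.range (T*t), ell T t k x • ell T t k)
        + ∑ i : Fin (T*t), dv (yVec T t i) (x i) • (EuclideanSpace.proj i :
            EuclideanSpace ℝ (Fin (T*t)) →L[ℝ] ℝ)) x := by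
  have hq : HasFDerivAt (fun y => qFun T t y)
      (∑ k ∈ Finset.range (T*t), ell T t k x • ell T t k) x := by
    have h1 : ∀ k ∈ Finset.range (T*t),
        HasFDerivAt (fun y => (ell T t k y)^2) ((2 * ell T t k x) • ell T t k) x := by
      intro k _
      have h := (hasDerivAt_pow 2 (ell T t k x)).comp_hasFDerivAt x (ell T t k).hasFDerivAt
      simpa [Function.comp_def] using h
    have hsum := HasFDerivAt.fun_sum h1
    have hmul := hsum.const_mul (1/2 : ℝ)
    have hfun : (fun y => (1/2) * ∑ k ∈ Finset.range (T*t), (ell T t k y)^2)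
        = fun y => qFun T t y := by
      funext y
      rw [qFun_eq_qsum T t hT y]
      simp only [ell_apply]
    have heq : (∑ k ∈ Finset.range (T*t), ell T t k x • ell T t k)
        = (1/2:ℝ) • ∑ k ∈ Finset.range (T*t), (2 * ell T t k x) • ell T t k := by
      rw [Finset.smul_sum]
      refine Finset.sum_congr rfl fun k _ => ?_
      rw [smul_smul]
      congr 1
      ring
    rw [← hfun, heq]
    exact hmul
  have hv : HasFDerivAt (fun y : EuclideanSpace ℝ (Fin (T*t)) =>
        ∑ i : Fin (T*t), vFun (yVec T t i) (y i))
      (∑ i : Fin (T*t), dv (yVec T t i) (x i) • (EuclideanSpace.proj i :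
          EuclideanSpace ℝ (Fin (T*t)) →L[ℝ] ℝ)) x := by
    apply HasFDerivAt.fun_sum
    intro i _
    exact (hasDerivAt_vFun _ (yVec_pos T t i) (x i)).comp_hasFDerivAt x
      (EuclideanSpace.proj i : EuclideanSpace ℝ (Fin (T*t)) →L[ℝ] ℝ).hasFDerivAt
  have := hq.add hv
  exact this

lemma prC_single {T t : ℕ} (j : ℕ) (m : Fin (T*t)) :
    prC T t j (EuclideanSpace.single m 1) = if j = m.1 + 1 then 1 else 0 := by
  unfold prC
  split_ifs with h h2 h2
  · rw [proj_ap, EuclideanSpace.single_apply, if_pos]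
    simp only [Fin.ext_iff]
    omega
  · rw [proj_ap, EuclideanSpace.single_apply, if_neg]
    intro hc
    exact h2 (by simp only [Fin.ext_iff] at hc; omega)
  · exact absurd ⟨by omega, by omega⟩ h
  · rfl

lemma gradient_gFun_coord (T t : ℕ) (hT : 0 < T) (x : EuclideanSpace ℝ (Fin (T*t)))
    (m : Fin (T*t)) :
    gradient (gFun T t) x m
      = (coord x (m.1+1) - cb T (m.1+1) * coord x m.1)
        - (if m.1 + 1 < T*t then
            cb T (m.1+2) * (coord x (m.1+2) - cb T (m.1+2) * coord x (m.1+1)) else 0)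
        + dv (coord (yVec T t) (m.1+1)) (coord x (m.1+1)) := by
  set L := (∑ k ∈ Finset.range (T*t), ell T t k x • ell T t k)
      + ∑ i : Fin (T*t), dv (yVec T t i) (x i) • (EuclideanSpace.proj i :
          EuclideanSpace ℝ (Fin (T*t)) →L[ℝ] ℝ) with hL
  have hG := (hasFDerivAt_iff_hasGradientAt.mp (hasFDerivAt_gFun T t hT x))
  rw [hG.gradient]
  have key : ((InnerProductSpace.toDual ℝ (EuclideanSpace ℝ (Fin (T*t)))).symm L) m
      = L (EuclideanSpace.single m 1) := by
    have h2 := InnerProductSpace.toDual_symm_apply (𝕜 := ℝ)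
      (E := EuclideanSpace ℝ (Fin (T*t))) (y := L) (x := EuclideanSpace.single m 1)
    rw [← h2, EuclideanSpace.inner_single_right]
    simp
  rw [key, hL]
  rw [ContinuousLinearMap.add_apply, ContinuousLinearMap.sum_apply,
    ContinuousLinearMap.sum_apply]
  have hvpart : ∑ i : Fin (T*t),
      (dv (yVec T t i) (x i) • (EuclideanSpace.proj i : EuclideanSpace ℝ (Fin (T*t)) →L[ℝ] ℝ))
        (EuclideanSpace.single m 1) = dv (yVec T t m) (x m) := by
    rw [Finset.sum_eq_single m]
    · simp [proj_ap, EuclideanSpace.single_apply]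
    · intro i _ hne
      simp only [ContinuousLinearMap.smul_apply, proj_ap,
        EuclideanSpace.single_apply, smul_eq_mul]
      rw [if_neg hne, mul_zero]
    · intro hm; exact absurd (Finset.mem_univ m) hm
  have hqpart : ∑ k ∈ Finset.range (T*t),
      (ell T t k x • ell T t k) (EuclideanSpace.single m 1)
      = ell T t m.1 x - (if m.1 + 1 < T*t then cb T (m.1+2) * ell T t (m.1+1) x else 0) := by
    have hterm : ∀ k ∈ Finset.range (T*t),
        (ell T t k x • ell T t k) (EuclideanSpace.single m 1)
        = (if k = m.1 then ell T t k x else 0)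
          - (if k = m.1 + 1 then cb T (k+1) * ell T t k x else 0) := by
      intro k _
      have hsingle : ell T t k (EuclideanSpace.single m 1)
          = (if k + 1 = m.1 + 1 then 1 else 0) - cb T (k+1) * (if k = m.1 + 1 then 1 else 0) := by
        simp [ell, prC_single]
      rw [ContinuousLinearMap.smul_apply, smul_eq_mul, hsingle]
      by_cases hk : k = m.1
      · rw [if_pos (by omega), if_neg (by omega), if_pos hk, if_neg (by omega)]
        ring
      · by_cases hk2 : k = m.1 + 1
        · rw [if_neg (by omega), if_pos hk2, if_neg hk, if_pos hk2]
          ring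
        · rw [if_neg (by omega), if_neg hk2, if_neg hk, if_neg hk2]
          ring
    rw [Finset.sum_congr rfl hterm, Finset.sum_sub_distrib,
      Finset.sum_ite_eq' (Finset.range (T*t)) m.1 (fun k => ell T t k x),
      Finset.sum_ite_eq' (Finset.range (T*t)) (m.1+1) (fun k => cb T (k+1) * ell T t k x),
      if_pos (Finset.mem_range.mpr m.2)]
    congr 1
    simp [Finset.mem_range]
  rw [hvpart, hqpart]
  simp only [ell_apply, coord_val]
  try ring
noncomputable def Wf (z : ℝ) : ℝ :=
  z - 32 * max (z - 31/32) 0 + 64 * max (z - 1) 0 - 32 * max (z - 33/32) 0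

lemma dv_hom (y z : ℝ) (hy : 0 < y) : dv y (y * z) = y * Wf z := by
  unfold dv Wf
  have h1 : y * z - 31/32*y = y * (z - 31/32) := by ring
  have h2 : y * z - y = y * (z - 1) := by ring
  have h3 : y * z - 33/32*y = y * (z - 33/32) := by ring
  rw [h1, h2, h3]
  rw [show y * (z - 31/32) = y * (z - 31/32) from rfl]
  have hm : ∀ a : ℝ, max (y * a) 0 = y * max a 0 := by
    intro a
    rw [mul_max_of_nonneg a 0 hy.le, mul_zero]
  rw [hm, hm, hm]
  ring

lemma Wf_nonneg {z : ℝ} (hz : 0 ≤ z) : 0 ≤ Wf z := by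
  unfold Wf
  rcases le_or_gt z (31/32) with h1 | h1
  · rw [max_eq_right (by linarith), max_eq_right (by linarith), max_eq_right (by linarith)]
    linarith
  · rcases le_or_gt z 1 with h2 | h2
    · rw [max_eq_left (by linarith), max_eq_right (by linarith), max_eq_right (by linarith)]
      linarith
    · rcases le_or_gt z (33/32) with h3 | h3
      · rw [max_eq_left (by linarith), max_eq_left (by linarith), max_eq_right (by linarith)]
        linarith
      · rw [max_eq_left (by linarith), max_eq_left (by linarith), max_eq_left (by linarith)]
        linarith

lemma Wf_eq_low {z : ℝ} (h : z ≤ 31/32) : Wf z = z := by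
  unfold Wf
  rw [max_eq_right (by linarith), max_eq_right (by linarith), max_eq_right (by linarith)]
  ring

lemma Wf_eq_high {z : ℝ} (h : 33/32 ≤ z) : Wf z = z := by
  unfold Wf
  rw [max_eq_left (by linarith), max_eq_left (by linarith), max_eq_left (by linarith)]
  ring

lemma coord_yVec (T t : ℕ) (k : ℕ) (h1 : 1 ≤ k) (h2 : k ≤ T*t) :
    coord (yVec T t) k = (7/8:ℝ)^((k-1)/T) := by
  unfold coord yVec
  rw [dif_pos ⟨h1, h2⟩]

lemma yTilde_eq (T t : ℕ) (k : ℕ) (h1 : 1 ≤ k) (h2 : k ≤ T*t) :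
    yTilde T t k = (7/8:ℝ)^((k-1)/T) := by
  unfold yTilde
  rw [if_neg (by omega), if_pos h2, coord_yVec T t k h1 h2]

lemma yTilde_pos (T t : ℕ) (hT : 0 < T) (ht : 0 < t) (k : ℕ) : 0 < yTilde T t k := by
  unfold yTilde
  have hd : 1 ≤ T*t := Nat.one_le_iff_ne_zero.mpr (by positivity)
  split_ifs with h1 h2
  · norm_num
  · rw [coord_yVec T t k (by omega) h2]
    positivity
  · rw [coord_yVec T t (T*t) hd (le_refl _)]
    positivity

lemma yTilde_succ (T t : ℕ) (hT : 0 < T) (k : ℕ) (h2 : 2 ≤ k) (hk : k ≤ T*t) :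
    yTilde T t k = cb T k * yTilde T t (k-1) := by
  rw [yTilde_eq T t k (by omega) hk, yTilde_eq T t (k-1) (by omega) (by omega)]
  obtain ⟨p, r, hpr, hrT⟩ : ∃ p r, T * p + r = k - 1 ∧ r < T :=
    ⟨(k-1)/T, (k-1)%T, Nat.div_add_mod (k-1) T, Nat.mod_lt _ hT⟩
  have hdiv1 : (k-1)/T = p := by
    rw [← hpr, Nat.mul_add_div hT, Nat.div_eq_of_lt hrT]; omega
  have hmod1 : (k-1) % T = r := by
    rw [← hpr, Nat.add_mod, Nat.mul_mod_right, Nat.mod_eq_of_lt hrT]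
    simp [Nat.mod_eq_of_lt hrT]
  unfold cb
  rw [hmod1, hdiv1]
  split_ifs with hr0
  · -- r = 0, so k - 1 = T * p with p ≥ 1
    have hp1 : 1 ≤ p := by
      by_contra hc
      have hp0 : p = 0 := by omega
      subst hp0
      rw [Nat.mul_zero] at hpr
      omega
    have e2 : (k-2)/T = p - 1 := by
      have hTp : T * p = T * (p - 1) + T := by
        conv_lhs => rw [show p = (p-1)+1 by omega]
        rw [Nat.mul_succ]
      have : k - 2 = T * (p-1) + (T-1) := by omega
      rw [this, Nat.mul_add_div hT, Nat.div_eq_of_lt (by omega)]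
      omega
    rw [show k - 1 - 1 = k - 2 by omega, e2]
    have hq' : (7/8:ℝ)^p = (7/8:ℝ)^(p-1) * (7/8) := by
      rw [← pow_succ]
      congr 1
      omega
    rw [hq']
    ring
  · have e2 : (k-2)/T = p := by
      have : k - 2 = T * p + (r - 1) := by omega
      rw [this, Nat.mul_add_div hT, Nat.div_eq_of_lt (by omega)]
      omega
    rw [show k - 1 - 1 = k - 2 by omega, e2]
    ring

lemma yTilde_one (T t : ℕ) (hT : 0 < T) (ht : 0 < t) : yTilde T t 1 = 1 := by
  rw [yTilde_eq T t 1 (le_refl _) (Nat.mul_pos hT ht)]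
  simp

lemma coord_zero {T t : ℕ} (x : EuclideanSpace ℝ (Fin (T*t))) : coord x 0 = 0 := by
  unfold coord
  rw [dif_neg (by omega)]

lemma zTilde_zero (T t : ℕ) (x : EuclideanSpace ℝ (Fin (T*t))) : zTilde T t x 0 = 0 := by
  unfold zTilde xTilde
  rw [if_pos (Nat.zero_le _), coord_zero]
  simp

lemma xTilde_mul (T t : ℕ) (hT : 0 < T) (ht : 0 < t) (x : EuclideanSpace ℝ (Fin (T*t)))
    (k : ℕ) : xTilde T t x k = yTilde T t k * zTilde T t x k := by
  unfold zTilde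
  rw [mul_div_cancel₀]
  exact ne_of_gt (yTilde_pos T t hT ht k)

lemma coord_eq_xTilde (T t : ℕ) (x : EuclideanSpace ℝ (Fin (T*t))) (k : ℕ) (hk : k ≤ T*t) :
    coord x k = xTilde T t x k := by
  unfold xTilde
  rw [if_pos hk]

lemma yTilde_eq_coord (T t : ℕ) (k : ℕ) (h1 : 1 ≤ k) (h2 : k ≤ T*t) :
    yTilde T t k = coord (yVec T t) k := by
  unfold yTilde
  rw [if_neg (by omega), if_pos h2]

lemma grad_formula (T t : ℕ) (hT : 0 < T) (ht : 0 < t) (x : EuclideanSpace ℝ (Fin (T*t)))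
    (j : ℕ) (hj1 : 1 ≤ j) (hjd : j ≤ T*t) :
    coord (gradient (gFun T t) x) j
      = yTilde T t j * ((zTilde T t x j - zTilde T t x (j-1))
          - (if j < T*t then (cb T (j+1))^2 else 0) * (zTilde T t x (j+1) - zTilde T t x j)
          + Wf (zTilde T t x j)) := by
  have hm : j - 1 < T*t := by omega
  have hcg : coord (gradient (gFun T t) x) j = gradient (gFun T t) x ⟨j-1, hm⟩ := by
    unfold coord
    rw [dif_pos ⟨hj1, hjd⟩]
  rw [hcg, gradient_gFun_coord T t hT x ⟨j-1, hm⟩]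
  have e0 : ((⟨j-1, hm⟩ : Fin (T*t)) : ℕ) = j - 1 := rfl
  rw [e0, show j - 1 + 1 = j by omega, show j - 1 + 2 = j + 1 by omega]
  set Z := zTilde T t x with hZ
  have hxT : ∀ k, k ≤ T*t → coord x k = yTilde T t k * Z k := by
    intro k hk
    rw [coord_eq_xTilde T t x k hk, xTilde_mul T t hT ht x k]
  have hdvp : dv (coord (yVec T t) j) (coord x j) = yTilde T t j * Wf (Z j) := by
    rw [← yTilde_eq_coord T t j hj1 hjd, hxT j hjd, dv_hom _ _ (yTilde_pos T t hT ht j)]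
  rcases lt_or_eq_of_le hjd with hlt | heq
  · rw [if_pos hlt, if_pos hlt]
    rw [hdvp, hxT j hjd, hxT (j-1) (by omega), hxT (j+1) (by omega)]
    have hy2 : yTilde T t (j+1) = cb T (j+1) * yTilde T t j :=
      yTilde_succ T t hT (j+1) (by omega) (by omega)
    rcases Nat.lt_or_ge j 2 with hj2 | hj2
    · have hj1' : j = 1 := by omega
      subst hj1'
      have hZ0 : Z 0 = 0 := by rw [hZ]; exact zTilde_zero T t x
      rw [show (1:ℕ) - 1 = 0 from rfl, hZ0, hy2]
      ring
    · have hy1 : yTilde T t j = cb T j * yTilde T t (j-1) :=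
        yTilde_succ T t hT j hj2 hjd
      rw [hy2, hy1]
      ring
  · rw [if_neg (by omega), if_neg (by omega)]
    rw [hdvp, hxT j hjd, hxT (j-1) (by omega)]
    rcases Nat.lt_or_ge j 2 with hj2 | hj2
    · have hj1' : j = 1 := by omega
      subst hj1'
      have hZ0 : Z 0 = 0 := by rw [hZ]; exact zTilde_zero T t x
      rw [show (1:ℕ) - 1 = 0 from rfl, hZ0]
      ring
    · have hy1 : yTilde T t j = cb T j * yTilde T t (j-1) :=
        yTilde_succ T t hT j hj2 hjd
      rw [hy1]
      ring
def Sst (T t : ℕ) (x : EuclideanSpace ℝ (Fin (T*t))) (j : ℕ) : Prop :=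
  (zTilde T t x j > 33/32 ∧ zTilde T t x j - zTilde T t x (j+1) ≥ 0) ∨
  (31/32 ≤ zTilde T t x j ∧ zTilde T t x j ≤ 33/32 ∧
    zTilde T t x j - zTilde T t x (j+1) ≥ -(1/16)) ∨
  (18/25 ≤ zTilde T t x j ∧ zTilde T t x j < 31/32 ∧
    zTilde T t x j - zTilde T t x (j+1) ≥ -(13/50))

lemma Sst_lb {T t : ℕ} {x : EuclideanSpace ℝ (Fin (T*t))} {j : ℕ} (h : Sst T t x j) :
    (18/25:ℝ) ≤ zTilde T t x j := by
  rcases h with ⟨h1, _⟩ | ⟨h1, _⟩ | ⟨h1, _⟩ <;> linarith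

lemma gmul_ge {γ v β : ℝ} (h0 : 0 ≤ γ) (h1 : γ ≤ 1) (hv : β ≤ v) (hβ : β ≤ 0) :
    β ≤ γ * v := by
  rcases le_or_gt 0 v with h | h
  · exact le_trans hβ (mul_nonneg h0 h)
  · nlinarith

lemma step_lemma (T t : ℕ) (hT : 0 < T) (ht : 0 < t) (x : EuclideanSpace ℝ (Fin (T*t)))
    (j : ℕ) (hj1 : 1 ≤ j) (hjd : j ≤ T*t) (hS : Sst T t x j)
    (hnd : ¬ Dominate T t x j) :
    (2 ≤ j → Sst T t x (j-1)) ∧ (j = 1 → False) := by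
  set Z := zTilde T t x with hZ
  have hy := yTilde_pos T t hT ht j
  have hzlb : (18/25:ℝ) ≤ Z j := Sst_lb hS
  have hZpos : (0:ℝ) < Z j := lt_of_lt_of_le (by norm_num) hzlb
  unfold Dominate at hnd
  push_neg at hnd
  obtain ⟨hx0, habs⟩ := hnd
  have hxj : coord x j = yTilde T t j * Z j := by
    rw [coord_eq_xTilde T t x j hjd, hZ]
    exact xTilde_mul T t hT ht x j
  rw [grad_formula T t hT ht x j hj1 hjd, hxj] at habs
  set γ := (if j < T*t then (cb T (j+1))^2 else 0) with hγ
  have habs' : |Z j - Z (j-1) - γ * (Z (j+1) - Z j) + Wf (Z j)| ≤ (19/100) * Z j := by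
    rw [abs_mul, abs_of_pos hy, abs_of_pos (mul_pos hy hZpos)] at habs
    have h019 : (0.19:ℝ) = 19/100 := by norm_num
    rw [h019] at habs
    nlinarith [abs_nonneg (Z j - Z (j-1) - γ * (Z (j+1) - Z j) + Wf (Z j))]
  have key : Z j - Z (j-1) - γ * (Z (j+1) - Z j) + Wf (Z j) ≤ (19/100) * Z j :=
    le_trans (le_abs_self _) habs'
  have hγ0 : 0 ≤ γ := by
    rw [hγ]; split_ifs
    · positivity
    · exact le_rfl
  have hγ1 : γ ≤ 1 := by
    rw [hγ]; split_ifs with h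
    · nlinarith [cb_nonneg T (j+1), cb_le_one T (j+1)]
    · norm_num
  have hneg : γ * (Z j - Z (j+1)) = - (γ * (Z (j+1) - Z j)) := by ring
  have hmain : Z j + γ * (Z j - Z (j+1)) + Wf (Z j) - (19/100) * Z j ≤ Z (j-1) := by
    linarith [key, hneg]
  have hjj : 2 ≤ j → j - 1 + 1 = j := by omega
  have hZ0 : Z 0 = 0 := by rw [hZ]; exact zTilde_zero T t x
  rcases hS with ⟨hA, hu⟩ | ⟨hb1, hb2, hu⟩ | ⟨hc1, hc2, hu⟩
  · -- state A
    have hγv : 0 ≤ γ * (Z j - Z (j+1)) := mul_nonneg hγ0 hu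
    have hW : Wf (Z j) = Z j := Wf_eq_high (le_of_lt hA)
    rw [hW] at hmain
    constructor
    · intro hj2
      left
      refine ⟨by linarith, ?_⟩
      rw [hjj hj2]
      linarith
    · intro hj1'
      subst hj1'
      rw [show (1:ℕ) - 1 = 0 from rfl, hZ0] at hmain
      linarith
  · -- state B
    have hγv : -(1/16:ℝ) ≤ γ * (Z j - Z (j+1)) := gmul_ge hγ0 hγ1 hu (by norm_num)
    have hW : 0 ≤ Wf (Z j) := Wf_nonneg (le_of_lt hZpos)
    constructor
    · intro hj2
      rcases lt_or_ge (33/32:ℝ) (Z (j-1)) with hgt | hle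
      · left
        refine ⟨hgt, ?_⟩
        rw [hjj hj2]
        linarith
      · rcases le_or_gt (31/32:ℝ) (Z (j-1)) with hge | hlt2
        · right; left
          refine ⟨hge, hle, ?_⟩
          rw [hjj hj2]
          linarith
        · right; right
          refine ⟨by linarith, hlt2, ?_⟩
          rw [hjj hj2]
          linarith
    · intro hj1'
      subst hj1'
      rw [show (1:ℕ) - 1 = 0 from rfl, hZ0] at hmain
      linarith
  · -- state C
    have hγv : -(13/50:ℝ) ≤ γ * (Z j - Z (j+1)) := gmul_ge hγ0 hγ1 hu (by norm_num)
    have hW : Wf (Z j) = Z j := Wf_eq_low (le_of_lt hc2)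
    rw [hW] at hmain
    constructor
    · intro hj2
      left
      refine ⟨by linarith, ?_⟩
      rw [hjj hj2]
      linarith
    · intro hj1'
      subst hj1'
      rw [show (1:ℕ) - 1 = 0 from rfl, hZ0] at hmain
      linarith

theorem exists_dominate_below' (T t : ℕ) (hT : 0 < T) (ht : 0 < t)
    (x : EuclideanSpace ℝ (Fin (T * t))) (n : ℕ) (hn1 : 1 ≤ n) (hn2 : n ≤ T * t)
    (hz : zTilde T t x n ∈ Set.Icc (31 / 32 : ℝ) (33 / 32))
    (hnd : ¬ Dominate T t x n)
    (h1 : zTilde T t x (n - 1) ≤ 33 / 32)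
    (h2 : zTilde T t x (n + 1) ≤ 33 / 32) :
    ∃ k, 1 ≤ k ∧ k ≤ n - 1 ∧ Dominate T t x k ∧ zTilde T t x k > 5 / 7 := by
  by_contra hcon
  push_neg at hcon
  have hnodom : ∀ j, 1 ≤ j → j ≤ n → Sst T t x j → ¬ Dominate T t x j := by
    intro j hj1 hj2 hS hD
    rcases eq_or_lt_of_le hj2 with rfl | hlt
    · exact hnd hD
    · have hle := hcon j hj1 (by omega) hD
      have hlb := Sst_lb hS
      linarith
  have hbase : Sst T t x n := by
    right; left
    exact ⟨hz.1, hz.2, by linarith [hz.1, h2]⟩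
  have hall : ∀ i, i ≤ n - 1 → Sst T t x (n - i) := by
    intro i
    induction i with
    | zero => intro _; simpa using hbase
    | succ i ih =>
      intro hi
      have hSi := ih (by omega)
      have hstep := step_lemma T t hT ht x (n-i) (by omega) (by omega) hSi
        (hnodom (n-i) (by omega) (by omega) hSi)
      have hres := hstep.1 (by omega)
      rw [show n - i - 1 = n - (i+1) by omega] at hres
      exact hres
  have hS1 : Sst T t x 1 := by
    have hres := hall (n-1) (le_refl _)
    rw [show n - (n-1) = 1 by omega] at hres
    exact hres
  exact (step_lemma T t hT ht x 1 (le_refl _) (by omega) hS1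
    (hnodom 1 (le_refl _) hn1 hS1)).2 rfl
/-- For `n ∈ {1, …, Tt}`: if `z̃_n ∈ [31/32, 33/32]`, `Dominate n`
fails, and `z̃_{n-1} ≤ 33/32`, `z̃_{n+1} ≤ 33/32`, then there exists `k ∈ {1, …, n-1}`
with `Dominate k` and `z̃_k > 5/7`. -/
theorem exists_dominate_below (T t : ℕ) (hT : 0 < T) (ht : 0 < t)
    (x : EuclideanSpace ℝ (Fin (T * t))) (n : ℕ) (hn1 : 1 ≤ n) (hn2 : n ≤ T * t)
    (hz : zTilde T t x n ∈ Set.Icc (31 / 32 : ℝ) (33 / 32))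
    (hnd : ¬ Dominate T t x n)
    (h1 : zTilde T t x (n - 1) ≤ 33 / 32)
    (h2 : zTilde T t x (n + 1) ≤ 33 / 32) :
    ∃ k, 1 ≤ k ∧ k ≤ n - 1 ∧ Dominate T t x k ∧ zTilde T t x k > 5 / 7 := by
  exact exists_dominate_below' T t hT ht x n hn1 hn2 hz hnd h1 h2
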